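/- For n ≥ 2, the two sets of tensors in V* ⊗ Λ^{n}V* coincide: {X ↦ ((x ∧ X) ⌟ ψ₊) ∧ ω : x ∈ V} = {X ↦ ((x ∧ X) ⌟ ψ₋) ∧ ω : x ∈ V}. -/

import Mathlib

noncomputable section

open scoped RealInnerProductSpace
open Function

namespace SUnPaper

variable {V : Type*} [NormedAddCommGroup V] [InnerProductSpace ℝ V]

/-- Wedge product of real-valued alternating forms. -/
def wedge {p q : ℕ} (a : V [⋀^Fin p]→ₗ[ℝ] ℝ) (b : V [⋀^Fin q]→ₗ[ℝ] ℝ) :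
    V [⋀^Fin (p + q)]→ₗ[ℝ] ℝ :=
  (((TensorProduct.lid ℝ ℝ).toLinearMap).compAlternatingMap (a.domCoprod b)).domDomCongr
    finSumFinEquiv

/-- Wedge product of complex-valued (ℝ-multilinear) alternating forms. -/
def cwedge {p q : ℕ} (a : V [⋀^Fin p]→ₗ[ℝ] ℂ) (b : V [⋀^Fin q]→ₗ[ℝ] ℂ) :
    V [⋀^Fin (p + q)]→ₗ[ℝ] ℂ :=
  ((LinearMap.mul' ℝ ℂ).compAlternatingMap (a.domCoprod b)).domDomCongr finSumFinEquiv

/-- The one-form `⟪·, x⟫` associated to a vector `x` via the metric. -/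
def oneForm (x : V) : V [⋀^Fin 1]→ₗ[ℝ] ℝ :=
  AlternatingMap.ofSubsingleton ℝ V ℝ 0 ((innerₗ V).flip x)

/-- A complex-valued one-form from an `ℝ`-linear map into `ℂ`. -/
def cOneForm (f : V →ₗ[ℝ] ℂ) : V [⋀^Fin 1]→ₗ[ℝ] ℂ :=
  AlternatingMap.ofSubsingleton ℝ V ℂ 0 f

/-- The complex one-form `x + i·y`, i.e. `w ↦ ⟪w, x⟫ + i ⟪w, y⟫`. -/
def cplxPair (x y : V) : V →ₗ[ℝ] ℂ :=
  Complex.ofRealAm.toLinearMap ∘ₗ ((innerₗ V).flip x)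
    + Complex.I • (Complex.ofRealAm.toLinearMap ∘ₗ ((innerₗ V).flip y))

/-- Iterated wedge of complex one-forms. -/
def cprod : ∀ (k : ℕ), (Fin k → (V [⋀^Fin 1]→ₗ[ℝ] ℂ)) → V [⋀^Fin k]→ₗ[ℝ] ℂ
  | 0, _ => AlternatingMap.constOfIsEmpty ℝ V (Fin 0) 1
  | (k + 1), f => cwedge (cprod k (f ∘ Fin.castSucc)) (f (Fin.last k))

/-- The complex volume form `Ψ = e₁ℂ ∧ ⋯ ∧ eₙℂ` of the SU(n)-structure determined by
`I` and the adapted basis `e₁, …, eₙ, Ie₁, …, Ieₙ`. -/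
def Psi (n : ℕ) (J : V →ₗ[ℝ] V) (e : Fin n → V) : V [⋀^Fin n]→ₗ[ℝ] ℂ :=
  cprod n fun j => cOneForm (cplxPair (e j) (J (e j)))

/-- `ψ₊ = Re (e₁ℂ ∧ ⋯ ∧ eₙℂ)`. -/
def psiP (n : ℕ) (J : V →ₗ[ℝ] V) (e : Fin n → V) : V [⋀^Fin n]→ₗ[ℝ] ℝ :=
  Complex.reLm.compAlternatingMap (Psi n J e)

/-- `ψ₋ = Im (e₁ℂ ∧ ⋯ ∧ eₙℂ)`. -/
def psiM (n : ℕ) (J : V →ₗ[ℝ] V) (e : Fin n → V) : V [⋀^Fin n]→ₗ[ℝ] ℝ :=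
  Complex.imLm.compAlternatingMap (Psi n J e)

/-- Interior product `x ⌟ b` of a `p`-form by a vector. -/
def ic : ∀ {p : ℕ}, V → (V [⋀^Fin p]→ₗ[ℝ] ℝ) → V [⋀^Fin (p - 1)]→ₗ[ℝ] ℝ
  | 0, _, _ => 0
  | (_ + 1), x, a => a.curryLeft x

/-- `k`-th power `ω^k = ω ∧ ⋯ ∧ ω`. -/
def wpow (ω : V [⋀^Fin 2]→ₗ[ℝ] ℝ) : ∀ k : ℕ, V [⋀^Fin (2 * k)]→ₗ[ℝ] ℝ
  | 0 => AlternatingMap.constOfIsEmpty ℝ V (Fin 0) 1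
  | (k + 1) => wedge (wpow ω k) ω

/-- Inner product of `p`-forms: `⟨a,c⟩ = (1/p!) Σ a(f_{i₁},…) c(f_{i₁},…)`. -/
def formInner {ι : Type*} [Fintype ι] (B : ι → V) {p : ℕ}
    (a c : V [⋀^Fin p]→ₗ[ℝ] ℝ) : ℝ :=
  (p.factorial : ℝ)⁻¹ * ∑ f : Fin p → ι, a (fun i => B (f i)) * c (fun i => B (f i))

/-- The space `⟦λ^{p,0}⟧`: real `p`-forms with `I₍ᵢ₎I₍ⱼ₎ b = -b` for all `i < j`. -/
def IsLam (J : V →ₗ[ℝ] V) {p : ℕ} (a : V [⋀^Fin p]→ₗ[ℝ] ℝ) : Prop :=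
  ∀ (v : Fin p → V) (i j : Fin p), i < j →
    a (Function.update (Function.update v i (J (v i))) j (J (v j))) = - a v


/-- for n ≥ 2,
{X ↦ ((x∧X)⌟ψ₊)∧ω : x ∈ V} = {X ↦ ((x∧X)⌟ψ₋)∧ω : x ∈ V}. -/

def JSlot (J : V →ₗ[ℝ] V) {p : ℕ} (a : V [⋀^Fin p]→ₗ[ℝ] ℂ) : Prop :=
  ∀ (v : Fin p → V) (i : Fin p),
    a (Function.update v i (J (v i))) = Complex.I * a v

lemma summand_J {p q : ℕ} (J : V →ₗ[ℝ] V)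
    (a : V [⋀^Fin p]→ₗ[ℝ] ℂ) (b : V [⋀^Fin q]→ₗ[ℝ] ℂ)
    (ha : JSlot J a) (hb : JSlot J b)
    (σ : Equiv.Perm.ModSumCongr (Fin p) (Fin q))
    (w : Fin p ⊕ Fin q → V) (k : Fin p ⊕ Fin q) :
    (LinearMap.mul' ℝ ℂ)
        (AlternatingMap.domCoprod.summand a b σ (Function.update w k (J (w k))))
      = Complex.I * (LinearMap.mul' ℝ ℂ) (AlternatingMap.domCoprod.summand a b σ w) := by
  induction σ using Quotient.inductionOn' with
  | h σ =>
    rw [AlternatingMap.domCoprod.summand_mk'']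
    simp only [MultilinearMap.smul_apply, MultilinearMap.domDomCongr_apply,
      MultilinearMap.domCoprod_apply, AlternatingMap.coe_multilinearMap]
    cases h : σ⁻¹ k with
    | inl i₀ =>
      have hk : σ (Sum.inl i₀) = k := by rw [← h]; simp
      have h1 : (fun i => Function.update w k (J (w k)) (σ (Sum.inl i)))
          = Function.update (fun i => w (σ (Sum.inl i))) i₀ (J (w (σ (Sum.inl i₀)))) := by
        funext i
        rcases eq_or_ne i i₀ with rfl | hi
        · rw [Function.update_self, hk, Function.update_self]
        · rw [Function.update_of_ne hi]
          rw [Function.update_of_ne]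
          rw [← hk]
          exact fun hc => hi (Sum.inl_injective (σ.injective hc))
      have h2 : (fun i => Function.update w k (J (w k)) (σ (Sum.inr i)))
          = fun i => w (σ (Sum.inr i)) := by
        funext i
        apply Function.update_of_ne
        rw [← hk]
        intro hc
        exact absurd (σ.injective hc) (by simp)
      rw [h1, h2]
      have := ha (fun i => w (σ (Sum.inl i))) i₀
      rcases Int.units_eq_one_or (Equiv.Perm.sign σ) with hs | hs <;>
        rw [hs] <;>
        simp only [one_smul, Units.neg_smul, map_neg, LinearMap.mul'_apply, this] <;>
        ring
    | inr i₀ =>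
      have hk : σ (Sum.inr i₀) = k := by rw [← h]; simp
      have h1 : (fun i => Function.update w k (J (w k)) (σ (Sum.inr i)))
          = Function.update (fun i => w (σ (Sum.inr i))) i₀ (J (w (σ (Sum.inr i₀)))) := by
        funext i
        rcases eq_or_ne i i₀ with rfl | hi
        · rw [Function.update_self, hk, Function.update_self]
        · rw [Function.update_of_ne hi]
          rw [Function.update_of_ne]
          rw [← hk]
          exact fun hc => hi (Sum.inr_injective (σ.injective hc))
      have h2 : (fun i => Function.update w k (J (w k)) (σ (Sum.inl i)))
          = fun i => w (σ (Sum.inl i)) := by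
        funext i
        apply Function.update_of_ne
        rw [← hk]
        intro hc
        exact absurd (σ.injective hc) (by simp)
      rw [h1, h2]
      have := hb (fun i => w (σ (Sum.inr i))) i₀
      rcases Int.units_eq_one_or (Equiv.Perm.sign σ) with hs | hs <;>
        rw [hs] <;>
        simp only [one_smul, Units.neg_smul, map_neg, LinearMap.mul'_apply, this] <;>
        ring

lemma cwedge_apply' {p q : ℕ} (a : V [⋀^Fin p]→ₗ[ℝ] ℂ) (b : V [⋀^Fin q]→ₗ[ℝ] ℂ)
    (u : Fin (p + q) → V) :
    cwedge a b u = ∑ σ : Equiv.Perm.ModSumCongr (Fin p) (Fin q),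
      (LinearMap.mul' ℝ ℂ) (AlternatingMap.domCoprod.summand a b σ
        (u ∘ finSumFinEquiv)) := by
  show (LinearMap.mul' ℝ ℂ) (a.domCoprod b (fun i => u (finSumFinEquiv i))) = _
  rw [AlternatingMap.domCoprod_apply, MultilinearMap.sum_apply, map_sum]
  rfl

lemma JSlot.cwedge {p q : ℕ} {J : V →ₗ[ℝ] V}
    {a : V [⋀^Fin p]→ₗ[ℝ] ℂ} {b : V [⋀^Fin q]→ₗ[ℝ] ℂ}
    (ha : JSlot J a) (hb : JSlot J b) : JSlot J (SUnPaper.cwedge a b) := by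
  intro v i
  rw [cwedge_apply', cwedge_apply', Finset.mul_sum]
  refine Finset.sum_congr rfl fun σ _ => ?_
  have hcomp : (Function.update v i (J (v i))) ∘ finSumFinEquiv
      = Function.update (v ∘ finSumFinEquiv) (finSumFinEquiv.symm i)
          (J ((v ∘ finSumFinEquiv) (finSumFinEquiv.symm i))) := by
    rw [Function.update_comp_equiv]
    simp
  rw [hcomp]
  exact summand_J J a b ha hb σ (v ∘ finSumFinEquiv) (finSumFinEquiv.symm i)

lemma cprod_JSlot (J : V →ₗ[ℝ] V) :
    ∀ (k : ℕ) (f : Fin k → (V [⋀^Fin 1]→ₗ[ℝ] ℂ)), (∀ j, JSlot J (f j)) →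
      JSlot J (cprod k f)
  | 0, _, _ => fun _ i => i.elim0
  | (k + 1), f, hf =>
      JSlot.cwedge (cprod_JSlot J k (f ∘ Fin.castSucc) fun j => hf _) (hf _)

lemma cOneForm_JSlot {J : V →ₗ[ℝ] V} (f : V →ₗ[ℝ] ℂ)
    (hf : ∀ w, f (J w) = Complex.I * f w) : JSlot J (cOneForm f) := by
  intro v i
  have hi : i = 0 := Subsingleton.elim _ _
  subst hi
  simp [cOneForm, hf]

lemma cplxPair_J {J : V →ₗ[ℝ] V} (hJ : ∀ v : V, J (J v) = -v)
    (hJorth : ∀ v w : V, ⟪J v, J w⟫ = ⟪v, w⟫) (x w : V) :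
    cplxPair x (J x) (J w) = Complex.I * cplxPair x (J x) w := by
  have h1 : ⟪J w, x⟫ = -⟪w, J x⟫ := by
    have : ⟪J w, J (J x)⟫ = ⟪w, J x⟫ := hJorth w (J x)
    rw [hJ x] at this
    rw [← this, inner_neg_right, neg_neg]
  have h2 : ⟪J w, J x⟫ = ⟪w, x⟫ := hJorth w x
  simp only [cplxPair, LinearMap.add_apply, LinearMap.comp_apply, LinearMap.smul_apply,
    AlgHom.toLinearMap_apply, Complex.ofRealAm_coe, LinearMap.flip_apply, innerₗ_apply_apply,
    smul_eq_mul]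
  rw [h1, h2]
  push_cast
  ring_nf
  rw [Complex.I_sq]
  ring

lemma Psi_JSlot (n : ℕ) (J : V →ₗ[ℝ] V) (hJ : ∀ v : V, J (J v) = -v)
    (hJorth : ∀ v w : V, ⟪J v, J w⟫ = ⟪v, w⟫) (e : Fin n → V) :
    JSlot J (Psi n J e) := by
  refine cprod_JSlot J n _ fun j => cOneForm_JSlot _ fun w => ?_
  exact cplxPair_J hJ hJorth (e j) w

lemma key_curry {n : ℕ} {J : V →ₗ[ℝ] V} (hJ : ∀ v : V, J (J v) = -v)
    (hJorth : ∀ v w : V, ⟪J v, J w⟫ = ⟪v, w⟫) (e : Fin (n + 1) → V) (x : V) :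
    (psiP (n + 1) J e).curryLeft x = (psiM (n + 1) J e).curryLeft (J x) := by
  ext v
  have h := Psi_JSlot (n + 1) J hJ hJorth e (Fin.cons x v) 0
  rw [Fin.cons_zero, Fin.update_cons_zero] at h
  simp only [psiP, psiM, AlternatingMap.curryLeft_apply_apply,
    LinearMap.compAlternatingMap_apply, Complex.reLm_coe, Complex.imLm_coe]
  show (Psi (n + 1) J e (Fin.cons x v)).re = (Psi (n + 1) J e (Fin.cons (J x) v)).im
  rw [h]
  simp [Complex.mul_im]

theorem W4_descriptions_agree
{V : Type*} [NormedAddCommGroup V] [InnerProductSpace ℝ V]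
    [FiniteDimensional ℝ V] (n : ℕ) (hdim : Module.finrank ℝ V = 2 * n)
    (J : V →ₗ[ℝ] V) (hJ : ∀ v : V, J (J v) = -v)
    (hJorth : ∀ v w : V, ⟪J v, J w⟫ = ⟪v, w⟫)
    (bas : OrthonormalBasis (Fin n ⊕ Fin n) ℝ V)
    (hbas : ∀ j : Fin n, bas (Sum.inr j) = J (bas (Sum.inl j)))
    (ω : V [⋀^Fin 2]→ₗ[ℝ] ℝ) (hω : ∀ x y : V, ω ![x, y] = ⟪x, J y⟫)
    (ψp ψm : V [⋀^Fin n]→ₗ[ℝ] ℝ)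
    (hψp : ψp = psiP n J (fun j => bas (Sum.inl j)))
    (hψm : ψm = psiM n J (fun j => bas (Sum.inl j)))
    (hn : 2 ≤ n) :
    {F : V → V [⋀^Fin (n - 1 - 1 + 2)]→ₗ[ℝ] ℝ |
        ∃ x : V, F = fun X => wedge (ic X (ic x ψp)) ω}
      = {F | ∃ x : V, F = fun X => wedge (ic X (ic x ψm)) ω} := by
  obtain ⟨m, rfl⟩ : ∃ m, n = m + 2 := ⟨n - 2, by omega⟩
  subst hψp hψm
  set e : Fin (m + 2) → V := fun j => bas (Sum.inl j) with he
  have hic : ∀ (a : V [⋀^Fin (m + 2)]→ₗ[ℝ] ℝ) (x : V), ic x a = a.curryLeft x :=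
    fun a x => rfl
  have hkey : ∀ x : V, ic x (psiP (m + 2) J e) = ic (J x) (psiM (m + 2) J e) := by
    intro x
    rw [hic, hic]
    exact key_curry hJ hJorth e x
  ext F
  simp only [Set.mem_setOf_eq]
  constructor
  · rintro ⟨x, rfl⟩
    exact ⟨J x, by rw [hkey x]⟩
  · rintro ⟨x, rfl⟩
    refine ⟨-(J x), ?_⟩
    have : J (-(J x)) = x := by rw [map_neg, hJ, neg_neg]
    rw [hkey (-(J x)), this]

end SUnPaper
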